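/- For every real number t ≠ 0 there exists s ∈ Spec(t) with |s| < 3/2. (Since 3/2 is the smallest element of {|s| : s ∈ Spec(0)}, i.e. the smallest Dirac eigenvalue of the round 3-sphere in absolute value, this shows that the inequality |λ₁^{tη}| < |λ₁| holds for every nonzero t, so the diamagnetic inequality fails on the round 3-sphere for every nonzero magnetic field tη.) -/
import Mathlib


/-- `f₀(k,p,t) = (1 + t + 2p − k)² + 4(k − p)(p + 1)`. -/
noncomputable def f0 (k p : ℤ) (t : ℝ) : ℝ :=
  (1 + t + 2 * (p : ℝ) - (k : ℝ)) ^ 2 + 4 * ((k : ℝ) - (p : ℝ)) * ((p : ℝ) + 1)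

/-- The spectrum of the magnetic Dirac operator `D^{tη}` on the round 3-sphere of
sectional curvature 1, where `η` is the Reeb one-form of the Hopf fibration. -/
noncomputable def Spec (t : ℝ) : Set ℝ :=
  {s | ∃ k : ℕ, s = 3 / 2 + (k : ℝ) + t} ∪
    {s | ∃ k : ℕ, s = 3 / 2 + (k : ℝ) - t} ∪
    {s | ∃ k p : ℕ, p < k ∧ s = 1 / 2 + Real.sqrt (f0 (k : ℤ) (p : ℤ) t)} ∪
    {s | ∃ k p : ℕ, p < k ∧ s = 1 / 2 - Real.sqrt (f0 (k : ℤ) (p : ℤ) t)}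

lemma aux13 (u : ℝ) (hu : 0 < u) :
    ∃ k : ℕ, |3 / 2 + (k : ℝ) - u| < 3 / 2 := by
  refine ⟨(⌈u⌉ - 1).toNat, ?_⟩
  have h1 : (1 : ℤ) ≤ ⌈u⌉ := by
    exact_mod_cast Int.ceil_pos.mpr hu
  have hcast : (((⌈u⌉ - 1).toNat : ℕ) : ℝ) = (⌈u⌉ : ℝ) - 1 := by
    have h2 : ((⌈u⌉ - 1).toNat : ℤ) = ⌈u⌉ - 1 := Int.toNat_of_nonneg (by omega)
    exact_mod_cast congrArg (Int.cast : ℤ → ℝ) h2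
  have hle : u ≤ (⌈u⌉ : ℝ) := Int.le_ceil u
  have hlt : (⌈u⌉ : ℝ) < u + 1 := Int.ceil_lt_add_one u
  rw [abs_lt]
  constructor
  · linarith [hcast]
  · linarith [hcast]

/-- For every `t ≠ 0` there exists `s ∈ Spec t` with `|s| < 3/2`: the diamagnetic
inequality fails on the round 3-sphere for every nonzero magnetic field `tη`. -/
theorem stmt13 (t : ℝ) (ht : t ≠ 0) : ∃ s ∈ Spec t, |s| < 3 / 2 := by
  rcases lt_or_gt_of_ne ht with hneg | hpos
  · obtain ⟨k, hk⟩ := aux13 (-t) (by linarith)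
    refine ⟨3 / 2 + (k : ℝ) + t, ?_, ?_⟩
    · exact Or.inl (Or.inl (Or.inl ⟨k, rfl⟩))
    · convert hk using 2; ring
  · obtain ⟨k, hk⟩ := aux13 t hpos
    exact ⟨3 / 2 + (k : ℝ) - t, Or.inl (Or.inl (Or.inr ⟨k, rfl⟩)), hk⟩
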